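/- arXiv:2505.01111 — 2 statements merged into one kernel-verified Lean document; each statement's English description precedes it below -/
import Mathlib

section
/- Let μ be a σ-finite measure on ℝ^d, F : ℝ^d → ℝ and T : ℝ^d → ℝ^k be measurable, and define the partition function Z(η) = ∫ exp(F(x) + ⟪η, T(x)⟫) dμ(x) for η ∈ ℝ^k. Fix data points x_1, …, x_N ∈ ℝ^d and define the log-likelihood l(η) = ∑_{i=1}^N (F(x_i) + ⟪η, T(x_i)⟫) − N · log Z(η). Suppose that at a point η* one has 0 < Z(η*) < ∞, that x ↦ T(x)·exp(F(x) + ⟪η*, T(x)⟫) is μ-integrable, and that Z is differentiable at η* with Fréchet derivative η' ↦ ∫ ⟪η', T(x)⟫ exp(F(x) + ⟪η*, T(x)⟫) dμ(x). If η* is a local maximum of l, then the model mean of the statistic equals the sample mean: (1/Z(η*)) ∫ T(x) exp(F(x) + ⟪η*, T(x)⟫) dμ(x) = (1/N) ∑_{i=1}^N T(x_i). -/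
open MeasureTheory Real
open scoped RealInnerProductSpace BigOperators

/-- If the parameter `ηs` is a local maximum of the log-likelihood of the hybrid
energy-based model `p_η(x) ∝ exp (F x + ⟪η, T x⟫)`, then the model mean of the
statistic `T` equals its sample mean over the data. -/
theorem hybrid_ebm_local_max_matches_statistics
    {d k : ℕ} (μ : Measure (EuclideanSpace ℝ (Fin d))) [SigmaFinite μ]
    (F : EuclideanSpace ℝ (Fin d) → ℝ)
    (T : EuclideanSpace ℝ (Fin d) → EuclideanSpace ℝ (Fin k))
    (hF : Measurable F) (hT : Measurable T)
    (Z : EuclideanSpace ℝ (Fin k) → ℝ)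
    (hZ : ∀ η, Z η = ∫ x, Real.exp (F x + ⟪η, T x⟫) ∂μ)
    (N : ℕ) (hN : 0 < N) (xs : Fin N → EuclideanSpace ℝ (Fin d))
    (l : EuclideanSpace ℝ (Fin k) → ℝ)
    (hl : ∀ η, l η = ∑ i, (F (xs i) + ⟪η, T (xs i)⟫) - N * Real.log (Z η))
    (ηs : EuclideanSpace ℝ (Fin k))
    (hZpos : 0 < Z ηs)
    (hZfin : Integrable (fun x => Real.exp (F x + ⟪ηs, T x⟫)) μ)
    (hTint : Integrable (fun x => Real.exp (F x + ⟪ηs, T x⟫) • T x) μ)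
    (hderiv : HasGradientAt Z (∫ x, Real.exp (F x + ⟪ηs, T x⟫) • T x ∂μ) ηs)
    (hmax : IsLocalMax l ηs) :
    (Z ηs)⁻¹ • (∫ x, Real.exp (F x + ⟪ηs, T x⟫) • T x ∂μ)
      = (N : ℝ)⁻¹ • ∑ i, T (xs i) := by
  set G := ∫ x, Real.exp (F x + ⟪ηs, T x⟫) • T x ∂μ with hGdef
  have hZne : Z ηs ≠ 0 := ne_of_gt hZpos
  -- fderiv of the linear part
  have hlin : HasFDerivAt (fun η : (EuclideanSpace ℝ (Fin k)) => ∑ i, (F (xs i) + ⟪η, T (xs i)⟫))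
      (InnerProductSpace.toDual ℝ (EuclideanSpace ℝ (Fin k)) (∑ i, T (xs i))) ηs := by
    have h : ∀ i : Fin N, HasFDerivAt (fun η : (EuclideanSpace ℝ (Fin k)) => F (xs i) + ⟪η, T (xs i)⟫)
        (InnerProductSpace.toDual ℝ (EuclideanSpace ℝ (Fin k)) (T (xs i))) ηs := by
      intro i
      have h1 : HasFDerivAt (fun η : (EuclideanSpace ℝ (Fin k)) => (InnerProductSpace.toDual ℝ (EuclideanSpace ℝ (Fin k)) (T (xs i))) η)
          (InnerProductSpace.toDual ℝ (EuclideanSpace ℝ (Fin k)) (T (xs i))) ηs :=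
        (InnerProductSpace.toDual ℝ (EuclideanSpace ℝ (Fin k)) (T (xs i))).hasFDerivAt
      have h2 := (hasFDerivAt_const (F (xs i)) ηs).fun_add h1
      simpa [InnerProductSpace.toDual_apply_apply, real_inner_comm, mul_comm] using h2
    have hsum := HasFDerivAt.fun_sum (fun i (_ : i ∈ Finset.univ) => h i)
    simpa [map_sum] using hsum
  -- fderiv of log ∘ Z
  have hlog : HasFDerivAt (fun η : (EuclideanSpace ℝ (Fin k)) => Real.log (Z η))
      ((Z ηs)⁻¹ • (InnerProductSpace.toDual ℝ (EuclideanSpace ℝ (Fin k)) G)) ηs :=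
    (Real.hasDerivAt_log hZne).comp_hasFDerivAt ηs hderiv.hasFDerivAt
  have hlfd : HasFDerivAt l
      (InnerProductSpace.toDual ℝ (EuclideanSpace ℝ (Fin k)) (∑ i, T (xs i)) -
        (N : ℝ) • ((Z ηs)⁻¹ • (InnerProductSpace.toDual ℝ (EuclideanSpace ℝ (Fin k)) G))) ηs := by
    have : l = fun η : (EuclideanSpace ℝ (Fin k)) => ∑ i, (F (xs i) + ⟪η, T (xs i)⟫) - N * Real.log (Z η) :=
      funext hl
    rw [this]
    exact hlin.sub (hlog.const_mul (N : ℝ))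
  have hzero := hmax.hasFDerivAt_eq_zero hlfd
  have hvec : (∑ i, T (xs i)) - ((N : ℝ) * (Z ηs)⁻¹) • G = 0 := by
    apply (InnerProductSpace.toDual ℝ (EuclideanSpace ℝ (Fin k))).injective
    rw [map_sub, LinearIsometryEquiv.map_smul, map_zero]
    rw [smul_smul] at hzero
    exact hzero
  have hNne : (N : ℝ) ≠ 0 := Nat.cast_ne_zero.mpr hN.ne'
  have hkey : (∑ i, T (xs i)) = ((N : ℝ) * (Z ηs)⁻¹) • G := by
    have := sub_eq_zero.mp hvec; exact this
  rw [hkey, smul_smul, inv_mul_cancel_left₀ hNne]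
end

section
/- Let μ be a σ-finite measure on ℝ^d, F : ℝ^d → ℝ measurable, and T : ℝ^d → ℝ a measurable statistic with T(x) ≥ 0 for μ-a.e. x. Let x_1, …, x_N ∈ ℝ^d be data points with T(x_i) = 0 for every i. Suppose at η* ∈ ℝ one has 0 < Z(η*) < ∞ where Z(η) = ∫ exp(F(x) + η·T(x)) dμ(x), that x ↦ T(x)·exp(F(x) + η*·T(x)) is μ-integrable, that Z is differentiable at η* with Z'(η*) = ∫ T(x) exp(F(x) + η*·T(x)) dμ(x), and that η* is a local maximum of l(η) = ∑_{i=1}^N (F(x_i) + η·T(x_i)) − N·log Z(η). Then the model's expected statistic is zero, E_{p_{η*}}[T] = (1/Z(η*)) ∫ T(x) exp(F(x) + η*·T(x)) dμ(x) = 0, and consequently T(x) = 0 for p_{η*}-almost every x; i.e., the model assigns probability zero to the set {x : T(x) > 0}. -/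
open MeasureTheory Real
open scoped BigOperators

/-- For a scalar statistic `T ≥ 0` with `T (xs i) = 0` on every data point, at a local
maximum `ηs` of the log-likelihood of the hybrid energy-based model the model mean of
`T` vanishes, and the model measure `p_{ηs} = (exp (F + ηs·T) / Z ηs) · μ` assigns
probability zero to the set `{x | T x > 0}`. -/
theorem hybrid_ebm_constraint_imposed_at_local_max
    {d : ℕ} (μ : Measure (EuclideanSpace ℝ (Fin d))) [SigmaFinite μ]
    (F : EuclideanSpace ℝ (Fin d) → ℝ) (T : EuclideanSpace ℝ (Fin d) → ℝ)
    (hF : Measurable F) (hT : Measurable T)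
    (hTnn : ∀ᵐ x ∂μ, 0 ≤ T x)
    (N : ℕ) (hN : 0 < N) (xs : Fin N → EuclideanSpace ℝ (Fin d))
    (hdata : ∀ i, T (xs i) = 0)
    (Z : ℝ → ℝ)
    (hZ : ∀ η, Z η = ∫ x, Real.exp (F x + η * T x) ∂μ)
    (ηs : ℝ)
    (hZpos : 0 < Z ηs)
    (hZfin : Integrable (fun x => Real.exp (F x + ηs * T x)) μ)
    (hTint : Integrable (fun x => T x * Real.exp (F x + ηs * T x)) μ)
    (hderiv : HasDerivAt Z (∫ x, T x * Real.exp (F x + ηs * T x) ∂μ) ηs)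
    (l : ℝ → ℝ)
    (hl : ∀ η, l η = ∑ i, (F (xs i) + η * T (xs i)) - N * Real.log (Z η))
    (hmax : IsLocalMax l ηs) :
    (Z ηs)⁻¹ * (∫ x, T x * Real.exp (F x + ηs * T x) ∂μ) = 0 ∧
    μ.withDensity (fun x => ENNReal.ofReal (Real.exp (F x + ηs * T x) / Z ηs))
      {x | 0 < T x} = 0 := by
  set I : ℝ := ∫ x, T x * Real.exp (F x + ηs * T x) ∂μ with hI
  -- l coincides with a differentiable function
  have hl' : ∀ η, l η = (∑ i, F (xs i)) - N * Real.log (Z η) := by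
    intro η; rw [hl]; simp [hdata]
  have hld : HasDerivAt l (-(N * (I / Z ηs))) ηs := by
    have hlog : HasDerivAt (fun η => Real.log (Z η)) (I / Z ηs) ηs :=
      hderiv.log hZpos.ne'
    have h1 : HasDerivAt (fun η => (∑ i, F (xs i)) - N * Real.log (Z η))
        (0 - N * (I / Z ηs)) ηs :=
      (hasDerivAt_const _ _).sub (hlog.const_mul (N : ℝ))
    have h2 : (0 : ℝ) - N * (I / Z ηs) = -(N * (I / Z ηs)) := by ring
    rw [h2] at h1
    exact h1.congr_of_eventuallyEq (by filter_upwards with η using hl' η)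
  have hderiv0 : -(N * (I / Z ηs)) = 0 := hmax.hasDerivAt_eq_zero hld
  have hNne : (N : ℝ) ≠ 0 := Nat.cast_ne_zero.mpr hN.ne'
  have hI0 : I = 0 := by
    have h3 : (N : ℝ) * (I / Z ηs) = 0 := by linarith
    rcases mul_eq_zero.mp h3 with h | h
    · exact absurd h hNne
    · exact (div_eq_zero_iff.mp h).resolve_right hZpos.ne'
  refine ⟨by rw [hI0, mul_zero], ?_⟩
  -- a.e. T x = 0
  have hnn : 0 ≤ᵐ[μ] fun x => T x * Real.exp (F x + ηs * T x) := by
    filter_upwards [hTnn] with x hx using mul_nonneg hx (Real.exp_pos _).le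
  have hae : (fun x => T x * Real.exp (F x + ηs * T x)) =ᵐ[μ] 0 :=
    (integral_eq_zero_iff_of_nonneg_ae hnn hTint).mp hI0
  have hT0 : ∀ᵐ x ∂μ, T x = 0 := by
    filter_upwards [hae] with x hx
    have : T x * Real.exp (F x + ηs * T x) = 0 := hx
    exact (mul_eq_zero.mp this).resolve_right (Real.exp_pos _).ne'
  have hμ0 : μ {x | 0 < T x} = 0 := by
    have := hT0
    rw [ae_iff] at this
    exact measure_mono_null (fun x hx => hx.ne') this
  exact (withDensity_absolutelyContinuous μ _) hμ0
end
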